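/- Let I be a matroidal ideal of degree d ≥ 2 in R = K[x_1,...,x_n] with full support. Then for any two variables x_i, x_j, either supp(I : x_i) = supp(I : x_j) or supp(I : x_i) ∪ supp(I : x_j) = {x_1,...,x_n}. -/

import Mathlib

noncomputable section
open MvPolynomial

variable (K : Type*) [Field K] (n : ℕ)

/-- Total degree of an exponent vector. -/
def expDeg (m : Fin n →₀ ℕ) : ℕ := m.sum fun _ e => e

/-- The minimal monomial generators of a monomial ideal, encoded by their
exponent vectors: monomials in `I` that are minimal under divisibility. -/
def minGens (I : Ideal (MvPolynomial (Fin n) K)) : Set (Fin n →₀ ℕ) :=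
  {m | (monomial m (1 : K)) ∈ I ∧
    ∀ m' : Fin n →₀ ℕ, (monomial m' (1 : K)) ∈ I → m' ≤ m → m' = m}

/-- A monomial ideal: an ideal generated by monomials. -/
def IsMonomialIdeal (I : Ideal (MvPolynomial (Fin n) K)) : Prop :=
  ∃ S : Set (Fin n →₀ ℕ), I = Ideal.span ((fun m => monomial m (1 : K)) '' S)

/-- A polymatroidal ideal of degree `d`: a monomial ideal all of whose minimal
generators have degree `d`, satisfying the exchange property. -/
def IsPolymatroidal (I : Ideal (MvPolynomial (Fin n) K)) (d : ℕ) : Prop :=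
  IsMonomialIdeal K n I ∧
  (∀ m ∈ minGens K n I, expDeg n m = d) ∧
  (∀ u ∈ minGens K n I, ∀ v ∈ minGens K n I, ∀ i : Fin n, v i < u i →
    ∃ j : Fin n, u j < v j ∧
      (u - Finsupp.single i 1 + Finsupp.single j 1) ∈ minGens K n I)

/-- A matroidal ideal: a squarefree polymatroidal ideal. -/
def IsMatroidal (I : Ideal (MvPolynomial (Fin n) K)) (d : ℕ) : Prop :=
  IsPolymatroidal K n I d ∧ ∀ m ∈ minGens K n I, ∀ i, m i ≤ 1

/-- The support of a monomial ideal: variables dividing some minimal generator. -/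
def suppI (I : Ideal (MvPolynomial (Fin n) K)) : Set (Fin n) :=
  {i | ∃ m ∈ minGens K n I, m i ≠ 0}

/-- The colon ideal `(I : x_i)`. -/
def colonVar (I : Ideal (MvPolynomial (Fin n) K)) (i : Fin n) :
    Ideal (MvPolynomial (Fin n) K) :=
  Submodule.colon I ((Ideal.span {X i} : Ideal (MvPolynomial (Fin n) K)) : Set (MvPolynomial (Fin n) K))

/-- The height of an ideal: infimum of heights of primes containing it. -/
def htIdeal (I : Ideal (MvPolynomial (Fin n) K)) : ℕ∞ :=
  ⨅ (p : PrimeSpectrum (MvPolynomial (Fin n) K)) (_ : I ≤ p.asIdeal),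
    Order.height p

/-- An ideal is unmixed if all associated primes of `R/I` have the same height. -/
def IsUnmixed (I : Ideal (MvPolynomial (Fin n) K)) : Prop :=
  ∀ p ∈ associatedPrimes (MvPolynomial (Fin n) K) (MvPolynomial (Fin n) K ⧸ I),
  ∀ q ∈ associatedPrimes (MvPolynomial (Fin n) K) (MvPolynomial (Fin n) K ⧸ I),
    htIdeal K n p = htIdeal K n q

/-- The graded maximal ideal `(x_1, …, x_n)`. -/
def maxIdeal : Ideal (MvPolynomial (Fin n) K) :=
  Ideal.span (Set.range (X : Fin n → MvPolynomial (Fin n) K))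

/-- The monomial prime ideal generated by the variables in `s`. -/
def primeOf (s : Finset (Fin n)) : Ideal (MvPolynomial (Fin n) K) :=
  Ideal.span ((fun i => (X i : MvPolynomial (Fin n) K)) '' s)

/-- The squarefree Veronese ideal of degree `d`. -/
def sqVeronese (d : ℕ) : Ideal (MvPolynomial (Fin n) K) :=
  Ideal.span {f | ∃ e : Finset (Fin n), e.card = d ∧ f = ∏ i ∈ e, X i}

/-- The variables belonging to an ideal (the variable generators of a
monomial prime). -/
def varsOf (p : Ideal (MvPolynomial (Fin n) K)) : Set (Fin n) :=
  {i | (X i : MvPolynomial (Fin n) K) ∈ p}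

/-- `I` is connected in codimension one: any two distinct minimal primes are
linked by a chain of minimal primes in which consecutive primes generate an
ideal on `height I + 1` variables. -/
def ConnCodimOne (I : Ideal (MvPolynomial (Fin n) K)) : Prop :=
  ∀ p ∈ I.minimalPrimes, ∀ q ∈ I.minimalPrimes, p ≠ q →
    ∃ (r : ℕ) (c : Fin (r + 1) → Ideal (MvPolynomial (Fin n) K)),
      (∀ i, c i ∈ I.minimalPrimes) ∧ c 0 = p ∧ c (Fin.last r) = q ∧
      ∀ i : Fin r,
        ((varsOf K n (c i.castSucc ⊔ c i.succ)).ncard : ℕ∞) = htIdeal K n I + 1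

/-- `R/I` is Cohen–Macaulay: there is a regular sequence on `R/I` inside the
graded maximal ideal whose length equals the Krull dimension of `R/I`. -/
def QuotientCM (I : Ideal (MvPolynomial (Fin n) K)) : Prop :=
  ∃ rs : List (MvPolynomial (Fin n) K),
    (∀ r ∈ rs, r ∈ maxIdeal K n) ∧
    RingTheory.Sequence.IsRegular (MvPolynomial (Fin n) K ⧸ I) rs ∧
    ((rs.length : ℕ∞) : WithBot ℕ∞) = ringKrullDim (MvPolynomial (Fin n) K ⧸ I)

section Stmt2Aux

variable {K : Type*} [Field K] {n : ℕ}

lemma expDeg_add' (a b : Fin n →₀ ℕ) : expDeg n (a + b) = expDeg n a + expDeg n b :=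
  Finsupp.sum_add_index' (fun _ => rfl) (fun _ _ _ => rfl)

lemma apply_le_expDeg (a : Fin n →₀ ℕ) (i : Fin n) : a i ≤ expDeg n a := by
  by_cases h : a i = 0
  · simp [h]
  · exact Finset.single_le_sum (f := fun x => a x) (fun _ _ => Nat.zero_le _)
      (Finsupp.mem_support_iff.mpr h)

lemma expDeg_mono' {a b : Fin n →₀ ℕ} (h : a ≤ b) : expDeg n a ≤ expDeg n b := by
  have hh : a + (b - a) = b := add_tsub_cancel_of_le h
  calc expDeg n a ≤ expDeg n a + expDeg n (b - a) := Nat.le_add_right _ _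
    _ = expDeg n b := by rw [← expDeg_add', hh]

lemma expDeg_tsub' {a b : Fin n →₀ ℕ} (h : b ≤ a) :
    expDeg n (a - b) = expDeg n a - expDeg n b := by
  have hh : (a - b) + b = a := tsub_add_cancel_of_le h
  have h2 : expDeg n (a - b) + expDeg n b = expDeg n a := by rw [← expDeg_add', hh]
  omega

lemma expDeg_single' (i : Fin n) (c : ℕ) : expDeg n (Finsupp.single i c) = c := by
  simp [expDeg, Finsupp.sum_single_index]

lemma expDeg_eq_zero' {a : Fin n →₀ ℕ} (h : expDeg n a = 0) : a = 0 := by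
  ext i
  have := apply_le_expDeg a i
  simp only [Finsupp.coe_zero, Pi.zero_apply]
  omega

lemma expDeg_lt' {a b : Fin n →₀ ℕ} (hle : a ≤ b) (hne : a ≠ b) :
    expDeg n a < expDeg n b := by
  have h1 := expDeg_tsub' hle
  have h2 : b - a ≠ 0 := by
    intro h
    exact hne (le_antisymm hle (tsub_eq_zero_iff_le.mp h))
  have h3 : expDeg n (b - a) ≠ 0 := fun h => h2 (expDeg_eq_zero' h)
  have h4 := expDeg_mono' hle
  omega

lemma mono_mem {I : Ideal (MvPolynomial (Fin n) K)} {g m : Fin n →₀ ℕ}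
    (hg : (monomial g (1 : K)) ∈ I) (hle : g ≤ m) : (monomial m (1 : K)) ∈ I := by
  have : (monomial m (1 : K)) = monomial (m - g) (1 : K) * monomial g (1 : K) := by
    rw [monomial_mul, one_mul, tsub_add_cancel_of_le hle]
  rw [this]
  exact Ideal.mul_mem_left _ _ hg

lemma exists_minGen_le {I : Ideal (MvPolynomial (Fin n) K)} :
    ∀ (N : ℕ) (m : Fin n →₀ ℕ), expDeg n m ≤ N → (monomial m (1 : K)) ∈ I →
      ∃ g ∈ minGens K n I, g ≤ m := by
  intro N
  induction N with
  | zero =>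
    intro m hdeg hm
    by_cases hmin : ∀ m', (monomial m' (1 : K)) ∈ I → m' ≤ m → m' = m
    · exact ⟨m, ⟨hm, hmin⟩, le_rfl⟩
    · push_neg at hmin
      obtain ⟨m', hm', hle, hne⟩ := hmin
      exact absurd (expDeg_lt' hle hne) (by omega)
  | succ N ih =>
    intro m hdeg hm
    by_cases hmin : ∀ m', (monomial m' (1 : K)) ∈ I → m' ≤ m → m' = m
    · exact ⟨m, ⟨hm, hmin⟩, le_rfl⟩
    · push_neg at hmin
      obtain ⟨m', hm', hle, hne⟩ := hmin
      have hlt := expDeg_lt' hle hne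
      obtain ⟨g, hg, hgle⟩ := ih m' (by omega) hm'
      exact ⟨g, hg, hgle.trans hle⟩

lemma mem_colonVar_iff {I : Ideal (MvPolynomial (Fin n) K)} {i : Fin n} {m : Fin n →₀ ℕ} :
    (monomial m (1 : K)) ∈ colonVar K n I i ↔
      (monomial (m + Finsupp.single i 1) (1 : K)) ∈ I := by
  rw [colonVar, show Submodule.colon I ((Ideal.span {X i} : Ideal (MvPolynomial (Fin n) K)) : Set (MvPolynomial (Fin n) K)) = I.colon ((Ideal.span {X i} : Ideal (MvPolynomial (Fin n) K)) : Set (MvPolynomial (Fin n) K)) from rfl,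
    Ideal.mem_colon_span_singleton,
    show (X i : MvPolynomial (Fin n) K) = monomial (Finsupp.single i 1) 1 from rfl,
    monomial_mul, one_mul]

lemma descend {I : Ideal (MvPolynomial (Fin n) K)} {d : ℕ} (hI : IsMatroidal K n I d)
    {v : Fin n →₀ ℕ} (hv : v ∈ minGens K n I) (p : Fin n) :
    ∀ (N : ℕ) (h : Fin n →₀ ℕ), h ∈ minGens K n I → h p ≠ 0 → expDeg n (h - v) ≤ N →
      ∃ h' ∈ minGens K n I, h' p ≠ 0 ∧ h' ≤ v + Finsupp.single p 1 := by
  obtain ⟨⟨-, hdeg, hex⟩, hsf⟩ := hI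
  intro N
  induction N with
  | zero =>
    intro h hh hp hN
    by_cases hle : h ≤ v + Finsupp.single p 1
    · exact ⟨h, hh, hp, hle⟩
    · exfalso
      rw [Finsupp.le_def] at hle; push_neg at hle
      obtain ⟨l, hl⟩ := hle
      have hadd : ((v + Finsupp.single p 1 : Fin n →₀ ℕ)) l = v l + Finsupp.single p 1 l :=
        Finsupp.add_apply _ _ _
      have ht : ((h - v : Fin n →₀ ℕ)) l = h l - v l := Finsupp.tsub_apply _ _ _
      have := apply_le_expDeg ((h - v : Fin n →₀ ℕ)) l
      omega
  | succ N ih =>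
    intro h hh hp hN
    by_cases hle : h ≤ v + Finsupp.single p 1
    · exact ⟨h, hh, hp, hle⟩
    rw [Finsupp.le_def] at hle; push_neg at hle
    obtain ⟨l, hl⟩ := hle
    have hlp : l ≠ p := by
      rintro rfl
      have h1 := hsf h hh l
      have h2 : ((v + Finsupp.single l 1 : Fin n →₀ ℕ)) l = v l + 1 := by
        rw [Finsupp.add_apply, Finsupp.single_apply, if_pos rfl]
      omega
    have hvl : v l < h l := by
      have hsl : Finsupp.single p 1 l = 0 := by
        rw [Finsupp.single_apply, if_neg (Ne.symm hlp)]
      have h2 : ((v + Finsupp.single p 1 : Fin n →₀ ℕ)) l = v l + Finsupp.single p 1 l :=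
        Finsupp.add_apply _ _ _
      omega
    obtain ⟨j, hj, hG⟩ := hex h hh v hv l hvl
    have hjl : j ≠ l := by rintro rfl; omega
    have hp'' : ((h - Finsupp.single l 1 + Finsupp.single j 1 : Fin n →₀ ℕ)) p ≠ 0 := by
      have h1 : ((h - Finsupp.single l 1 + Finsupp.single j 1 : Fin n →₀ ℕ)) p
          = h p - Finsupp.single l 1 p + Finsupp.single j 1 p := by
        rw [Finsupp.add_apply, Finsupp.tsub_apply]
      have hslp : Finsupp.single l 1 p = 0 := by
        rw [Finsupp.single_apply, if_neg hlp]
      omega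
    have hkey : h - Finsupp.single l 1 + Finsupp.single j 1 - v
        = (h - v) - Finsupp.single l 1 := by
      ext a
      simp only [Finsupp.tsub_apply, Finsupp.add_apply, Finsupp.single_apply]
      rcases eq_or_ne l a with rfl | hal
      · rcases eq_or_ne j l with hje | hjne
        · exact absurd hje hjl
        · rw [if_pos rfl, if_neg hjne]
          omega
      · rcases eq_or_ne j a with rfl | haj
        · rw [if_neg hal, if_pos rfl]
          omega
        · rw [if_neg hal, if_neg haj]
          omega
    have hsub : Finsupp.single l 1 ≤ h - v := by
      rw [Finsupp.single_le_iff, Finsupp.tsub_apply]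
      omega
    have hdeg'' : expDeg n (h - Finsupp.single l 1 + Finsupp.single j 1 - v) ≤ N := by
      rw [hkey, expDeg_tsub' hsub, expDeg_single']
      have h1 : 1 ≤ ((h - v : Fin n →₀ ℕ)) l := by rw [Finsupp.tsub_apply]; omega
      have := apply_le_expDeg ((h - v : Fin n →₀ ℕ)) l
      omega
    exact ih _ hG hp'' hdeg''
lemma minGens_colon {I : Ideal (MvPolynomial (Fin n) K)} {d : ℕ} (hI : IsMatroidal K n I d)
    (hfull : ∀ k : Fin n, ∃ g ∈ minGens K n I, g k ≠ 0) (i : Fin n) :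
    minGens K n (colonVar K n I i)
      = {m | ∃ g ∈ minGens K n I, g i ≠ 0 ∧ m = g - Finsupp.single i 1} := by
  ext m
  constructor
  · rintro ⟨hm1, hm2⟩
    rw [mem_colonVar_iff] at hm1
    obtain ⟨g, hg, hgle⟩ :=
      exists_minGen_le (expDeg n (m + Finsupp.single i 1)) _ le_rfl hm1
    by_cases hgi : g i = 0
    · have hglem : g ≤ m := by
        rw [Finsupp.le_def]; intro a
        have hla := Finsupp.le_def.mp hgle a
        have hadd : ((m + Finsupp.single i 1 : Fin n →₀ ℕ)) a
            = m a + Finsupp.single i 1 a := Finsupp.add_apply _ _ _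
        rcases eq_or_ne a i with rfl | hai
        · omega
        · have hs : Finsupp.single i 1 a = 0 := by
            rw [Finsupp.single_apply, if_neg (Ne.symm hai)]
          omega
      have hgJ : (monomial g (1 : K)) ∈ colonVar K n I i := by
        rw [mem_colonVar_iff]
        exact mono_mem hg.1 le_self_add
      have hge : g = m := hm2 g hgJ hglem
      subst hge
      obtain ⟨h0, hh0, hh0i⟩ := hfull i
      obtain ⟨h', hh', hpi, hle'⟩ :=
        descend hI hg i (expDeg n (h0 - g)) h0 hh0 hh0i le_rfl
      have hml : h' - Finsupp.single i 1 ≤ g := by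
        rw [tsub_le_iff_right]; exact hle'
      have hsle : Finsupp.single i 1 ≤ h' := by
        rw [Finsupp.single_le_iff]; omega
      have hmem : (monomial (h' - Finsupp.single i 1) (1 : K)) ∈ colonVar K n I i := by
        rw [mem_colonVar_iff, tsub_add_cancel_of_le hsle]
        exact hh'.1
      exact ⟨h', hh', hpi, (hm2 _ hmem hml).symm⟩
    · have hml : g - Finsupp.single i 1 ≤ m := by rw [tsub_le_iff_right]; exact hgle
      have hsle : Finsupp.single i 1 ≤ g := by rw [Finsupp.single_le_iff]; omega
      have hmem : (monomial (g - Finsupp.single i 1) (1 : K)) ∈ colonVar K n I i := by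
        rw [mem_colonVar_iff, tsub_add_cancel_of_le hsle]
        exact hg.1
      exact ⟨g, hg, hgi, (hm2 _ hmem hml).symm⟩
  · rintro ⟨g, hg, hgi, rfl⟩
    have hsle : Finsupp.single i 1 ≤ g := by rw [Finsupp.single_le_iff]; omega
    have hcan : g - Finsupp.single i 1 + Finsupp.single i 1 = g := tsub_add_cancel_of_le hsle
    refine ⟨by rw [mem_colonVar_iff, hcan]; exact hg.1, ?_⟩
    intro m' hm' hle
    rw [mem_colonVar_iff] at hm'
    obtain ⟨g', hg', hgle'⟩ := exists_minGen_le _ _ le_rfl hm'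
    have hgg : g' ≤ g := by
      calc g' ≤ m' + Finsupp.single i 1 := hgle'
        _ ≤ (g - Finsupp.single i 1) + Finsupp.single i 1 := add_le_add_left hle _
        _ = g := hcan
    have heq : g' = g := hg.2 g' hg'.1 hgg
    have hfin : g ≤ m' + Finsupp.single i 1 := heq ▸ hgle'
    exact le_antisymm hle (by rw [tsub_le_iff_right]; exact hfin)

lemma suppI_colon {I : Ideal (MvPolynomial (Fin n) K)} {d : ℕ} (hI : IsMatroidal K n I d)
    (hfull : ∀ k : Fin n, ∃ g ∈ minGens K n I, g k ≠ 0) (i : Fin n) :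
    suppI K n (colonVar K n I i)
      = {k | k ≠ i ∧ ∃ g ∈ minGens K n I, g i ≠ 0 ∧ g k ≠ 0} := by
  have hsf := hI.2
  ext k
  simp only [suppI, Set.mem_setOf_eq, minGens_colon hI hfull i]
  constructor
  · rintro ⟨m, ⟨g, hg, hgi, rfl⟩, hk⟩
    have ht : ((g - Finsupp.single i 1 : Fin n →₀ ℕ)) k
        = g k - Finsupp.single i 1 k := Finsupp.tsub_apply _ _ _
    rcases eq_or_ne k i with rfl | hki
    · exfalso
      have h1 := hsf g hg k
      have h2 : Finsupp.single k 1 k = 1 := by rw [Finsupp.single_apply, if_pos rfl]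
      omega
    · have h2 : Finsupp.single i 1 k = 0 := by
        rw [Finsupp.single_apply, if_neg (Ne.symm hki)]
      exact ⟨hki, g, hg, hgi, by omega⟩
  · rintro ⟨hki, g, hg, hgi, hgk⟩
    refine ⟨g - Finsupp.single i 1, ⟨g, hg, hgi, rfl⟩, ?_⟩
    have ht : ((g - Finsupp.single i 1 : Fin n →₀ ℕ)) k
        = g k - Finsupp.single i 1 k := Finsupp.tsub_apply _ _ _
    have h2 : Finsupp.single i 1 k = 0 := by
      rw [Finsupp.single_apply, if_neg (Ne.symm hki)]
    omega

lemma par_step {I : Ideal (MvPolynomial (Fin n) K)} {d : ℕ} (hI : IsMatroidal K n I d)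
    (hfull : ∀ k : Fin n, ∃ g ∈ minGens K n I, g k ≠ 0)
    {i k : Fin n} (hik : i ≠ k)
    (hpar : ∀ g ∈ minGens K n I, ¬(g i ≠ 0 ∧ g k ≠ 0)) :
    ∀ m, (m ≠ i ∧ ∃ g ∈ minGens K n I, g i ≠ 0 ∧ g m ≠ 0) →
         (m ≠ k ∧ ∃ g ∈ minGens K n I, g k ≠ 0 ∧ g m ≠ 0) := by
  have hdeg := hI.1.2.1
  rintro m ⟨hmi, g, hg, hgi, hgm⟩
  have hgk : g k = 0 := by
    by_contra h; exact hpar g hg ⟨hgi, h⟩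
  have hmk : m ≠ k := by rintro rfl; omega
  obtain ⟨h0, hh0, hh0k⟩ := hfull k
  obtain ⟨h', hh', hk', hle'⟩ := descend hI hg k (expDeg n (h0 - g)) h0 hh0 hh0k le_rfl
  have hi' : h' i = 0 := by
    by_contra h; exact hpar h' hh' ⟨h, hk'⟩
  have hm' : h' m ≠ 0 := by
    intro hm0
    have hcon : h' + Finsupp.single m 1 + Finsupp.single i 1 ≤ g + Finsupp.single k 1 := by
      rw [Finsupp.le_def]; intro a
      have hla := Finsupp.le_def.mp hle' a
      have hb : ((g + Finsupp.single k 1 : Fin n →₀ ℕ)) a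
          = g a + Finsupp.single k 1 a := Finsupp.add_apply _ _ _
      have hc : ((h' + Finsupp.single m 1 + Finsupp.single i 1 : Fin n →₀ ℕ)) a
          = h' a + Finsupp.single m 1 a + Finsupp.single i 1 a := by
        rw [Finsupp.add_apply, Finsupp.add_apply]
      rw [hb] at hla
      rw [hc, hb]
      rcases eq_or_ne m a with rfl | ham
      · have q1 : Finsupp.single m (1:ℕ) m = 1 := by rw [Finsupp.single_apply, if_pos rfl]
        have q2 : Finsupp.single i (1:ℕ) m = 0 := by
          rw [Finsupp.single_apply, if_neg (Ne.symm hmi)]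
        have q3 : Finsupp.single k (1:ℕ) m = 0 := by
          rw [Finsupp.single_apply, if_neg (Ne.symm hmk)]
        omega
      · rcases eq_or_ne i a with rfl | hai
        · have q1 : Finsupp.single m (1:ℕ) i = 0 := by
            rw [Finsupp.single_apply, if_neg ham]
          have q2 : Finsupp.single i (1:ℕ) i = 1 := by rw [Finsupp.single_apply, if_pos rfl]
          have q3 : Finsupp.single k (1:ℕ) i = 0 := by
            rw [Finsupp.single_apply, if_neg (Ne.symm hik)]
          omega
        · rcases eq_or_ne k a with rfl | hak
          · have q1 : Finsupp.single m (1:ℕ) k = 0 := by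
              rw [Finsupp.single_apply, if_neg ham]
            have q2 : Finsupp.single i (1:ℕ) k = 0 := by
              rw [Finsupp.single_apply, if_neg hai]
            have q3 : Finsupp.single k (1:ℕ) k = 1 := by
              rw [Finsupp.single_apply, if_pos rfl]
            omega
          · have q1 : Finsupp.single m (1:ℕ) a = 0 := by
              rw [Finsupp.single_apply, if_neg ham]
            have q2 : Finsupp.single i (1:ℕ) a = 0 := by
              rw [Finsupp.single_apply, if_neg hai]
            have q3 : Finsupp.single k (1:ℕ) a = 0 := by
              rw [Finsupp.single_apply, if_neg hak]
            omega
    have hmono := expDeg_mono' hcon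
    rw [expDeg_add', expDeg_add', expDeg_add', expDeg_single', expDeg_single',
      expDeg_single'] at hmono
    have h1 : expDeg n h' = d := hdeg h' hh'
    have h2 : expDeg n g = d := hdeg g hg
    omega
  exact ⟨hmk, h', hh', hk', hm'⟩

lemma par_eq {I : Ideal (MvPolynomial (Fin n) K)} {d : ℕ} (hI : IsMatroidal K n I d)
    (hfull : ∀ k : Fin n, ∃ g ∈ minGens K n I, g k ≠ 0)
    {i k : Fin n} (hik : i ≠ k)
    (hpar : ∀ g ∈ minGens K n I, ¬(g i ≠ 0 ∧ g k ≠ 0)) :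
    {m | m ≠ i ∧ ∃ g ∈ minGens K n I, g i ≠ 0 ∧ g m ≠ 0}
      = {m | m ≠ k ∧ ∃ g ∈ minGens K n I, g k ≠ 0 ∧ g m ≠ 0} := by
  have hpar' : ∀ g ∈ minGens K n I, ¬(g k ≠ 0 ∧ g i ≠ 0) :=
    fun g hg h => hpar g hg ⟨h.2, h.1⟩
  ext m
  exact ⟨fun h => par_step hI hfull hik hpar m h,
    fun h => par_step hI hfull hik.symm hpar' m h⟩

end Stmt2Aux

/-- For a matroidal ideal of degree `d ≥ 2` with full support, for all
variables `x_i, x_j`, either `supp(I : x_i) = supp(I : x_j)` or their union is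
everything. -/
theorem stmt2 {K : Type*} [Field K] {n : ℕ} (hn : 0 < n)
    (I : Ideal (MvPolynomial (Fin n) K)) (d : ℕ) (hd : 2 ≤ d)
    (hI : IsMatroidal K n I d) (hsupp : suppI K n I = Set.univ) :
    ∀ i j : Fin n,
      suppI K n (colonVar K n I i) = suppI K n (colonVar K n I j) ∨
      suppI K n (colonVar K n I i) ∪ suppI K n (colonVar K n I j) = Set.univ := by
  intro i j
  have hfull : ∀ k : Fin n, ∃ g ∈ minGens K n I, g k ≠ 0 := fun k =>
    (hsupp ▸ Set.mem_univ k : k ∈ suppI K n I)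
  rw [suppI_colon hI hfull i, suppI_colon hI hfull j]
  by_cases hall : ∀ k : Fin n, (k ≠ i ∧ ∃ g ∈ minGens K n I, g i ≠ 0 ∧ g k ≠ 0) ∨
      (k ≠ j ∧ ∃ g ∈ minGens K n I, g j ≠ 0 ∧ g k ≠ 0)
  · right
    apply Set.eq_univ_of_forall
    intro k
    rcases hall k with h | h
    · exact Set.mem_union_left _ h
    · exact Set.mem_union_right _ h
  · left
    obtain ⟨k, hk⟩ := not_forall.mp hall
    have hk1 : ¬(k ≠ i ∧ ∃ g ∈ minGens K n I, g i ≠ 0 ∧ g k ≠ 0) := fun a => hk (Or.inl a)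
    have hk2 : ¬(k ≠ j ∧ ∃ g ∈ minGens K n I, g j ≠ 0 ∧ g k ≠ 0) := fun a => hk (Or.inr a)
    rcases eq_or_ne i j with rfl | hij
    · rfl
    rcases eq_or_ne k i with rfl | hki
    · have hparji : ∀ g ∈ minGens K n I, ¬(g j ≠ 0 ∧ g k ≠ 0) := fun g hg hand =>
        hk2 ⟨hij, g, hg, hand.1, hand.2⟩
      exact (par_eq hI hfull (Ne.symm hij) hparji).symm
    rcases eq_or_ne k j with rfl | hkj
    · have hparij : ∀ g ∈ minGens K n I, ¬(g i ≠ 0 ∧ g k ≠ 0) := fun g hg hand =>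
        hk1 ⟨hij.symm, g, hg, hand.1, hand.2⟩
      exact par_eq hI hfull hij hparij
    · have hparik : ∀ g ∈ minGens K n I, ¬(g i ≠ 0 ∧ g k ≠ 0) := fun g hg hand =>
        hk1 ⟨hki, g, hg, hand.1, hand.2⟩
      have hparjk : ∀ g ∈ minGens K n I, ¬(g j ≠ 0 ∧ g k ≠ 0) := fun g hg hand =>
        hk2 ⟨hkj, g, hg, hand.1, hand.2⟩
      exact (par_eq hI hfull (Ne.symm hki) hparik).trans
        (par_eq hI hfull (Ne.symm hkj) hparjk).symm
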